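/- For every V ∈ 𝓕 and every positive integer N: e(Γ_N(V), V) = 0 and e(V, Γ_N(V)) ≤ 1/N; consequently d(V, Γ_N(V)) ≤ 1/N. -/

import Mathlib

/-- The upset of `A` within `[0,1]^K`: points of `[0,1]^K` dominating some point of `A`. -/
def upset (K : ℕ) (A : Set (Fin K → ℝ)) : Set (Fin K → ℝ) :=
  {x | x ∈ Set.Icc (0 : Fin K → ℝ) 1 ∧ ∃ y ∈ A, y ≤ x}

/-- Membership in the space `𝓕`: a nonempty Pareto frontier in `[0,1]^K`
(no element dominates a different element) whose upset is closed and convex. -/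
def memF (K : ℕ) (V : Set (Fin K → ℝ)) : Prop :=
  V.Nonempty ∧ V ⊆ Set.Icc (0 : Fin K → ℝ) 1 ∧
    (∀ u ∈ V, ∀ v ∈ V, u ≤ v → u = v) ∧
    IsClosed (upset K V) ∧ Convex ℝ (upset K V)

/-- The metric `d` on `𝓕`: Hausdorff distance (for the ℓ∞ norm) between upsets. -/
noncomputable def dF (K : ℕ) (U V : Set (Fin K → ℝ)) : ℝ :=
  Metric.hausdorffDist (upset K U) (upset K V)

/-- `e(U,V)`: the least `ε ≥ 0` such that every `u ∈ U` `ε`-dominates some `v ∈ V`. -/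
noncomputable def eDom (K : ℕ) (U V : Set (Fin K → ℝ)) : ℝ :=
  sInf {ε : ℝ | 0 ≤ ε ∧ ∀ u ∈ U, ∃ v ∈ V, ∀ i, v i ≤ u i + ε}

/-- The lower Pareto frontier `Λ(S)`: the minimal elements of `S` in the
coordinatewise order, i.e. the elements of `S` dominating no other element of `S`. -/
def pareto (K : ℕ) (S : Set (Fin K → ℝ)) : Set (Fin K → ℝ) :=
  {x ∈ S | ∀ y ∈ S, y ≤ x → y = x}

/-- The parameter set `𝒫`: vectors in `[0,1]^K` with at least one zero coordinate. -/
def paramSet (K : ℕ) : Set (Fin K → ℝ) :=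
  {p | (∀ i, p i ∈ Set.Icc (0:ℝ) 1) ∧ ∃ k, p k = 0}

/-- `F(p,V) = t*·1 + p`, where `t*` is the smallest `t` such that `t·1 + p` lies in
the upset of `V` taken in `[0,2]^K`. -/
noncomputable def Fparam (K : ℕ) (p : Fin K → ℝ) (V : Set (Fin K → ℝ)) : Fin K → ℝ :=
  fun i =>
    sInf {t : ℝ | (∀ j, 0 ≤ t + p j ∧ t + p j ≤ 2) ∧ ∃ y ∈ V, ∀ j, y j ≤ t + p j} + p i

/-- The grid `𝒫_N ⊆ 𝒫`: coordinates restricted to `{0, 1/N, …, 1}`. -/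
def paramSetN (K N : ℕ) : Set (Fin K → ℝ) :=
  {p | p ∈ paramSet K ∧ ∀ i, ∃ j : ℕ, j ≤ N ∧ p i = (j : ℝ) / N}

/-- The approximation operator `Γ_N`: Pareto frontier of the closed convex hull of
`{F(p,V) : p ∈ 𝒫_N}`. -/
noncomputable def gammaN (K N : ℕ) (V : Set (Fin K → ℝ)) : Set (Fin K → ℝ) :=
  pareto K (closure (convexHull ℝ ((fun p => Fparam K p V) '' paramSetN K N)))

/-! ### Auxiliary material -/

/-- The feasibility set whose infimum is `t*`. -/
def Sset (K : ℕ) (p : Fin K → ℝ) (V : Set (Fin K → ℝ)) : Set ℝ :=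
  {t : ℝ | (∀ j, 0 ≤ t + p j ∧ t + p j ≤ 2) ∧ ∃ y ∈ V, ∀ j, y j ≤ t + p j}

lemma one_mem_Sset {K : ℕ} {V : Set (Fin K → ℝ)} {p : Fin K → ℝ}
    (hV : memF K V) (hp : ∀ i, 0 ≤ p i ∧ p i ≤ 1) : (1:ℝ) ∈ Sset K p V := by
  obtain ⟨v, hv⟩ := hV.1
  have hv01 := hV.2.1 hv
  refine ⟨fun j => ⟨by linarith [(hp j).1], by linarith [(hp j).2]⟩, v, hv, fun j => ?_⟩
  have h1 : v j ≤ 1 := by simpa using hv01.2 j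
  linarith [(hp j).1]

lemma Sset_bddBelow {K : ℕ} {V : Set (Fin K → ℝ)} {p : Fin K → ℝ}
    (hK : 0 < K) (hp : ∀ i, p i ≤ 1) : BddBelow (Sset K p V) :=
  ⟨-1, fun t ht => by have := (ht.1 ⟨0, hK⟩).1; linarith [hp ⟨0, hK⟩]⟩

lemma Sset_isClosed {K : ℕ} {V : Set (Fin K → ℝ)} {p : Fin K → ℝ}
    (hV : memF K V) : IsClosed (Sset K p V) := by
  have h1 : Sset K p V = (⋂ j, Set.Icc (-p j) (2 - p j)) ∩
      ((fun t : ℝ => fun i => min (t + p i) 1) ⁻¹' upset K V) := by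
    ext t
    simp only [Sset, Set.mem_inter_iff, Set.mem_iInter, Set.mem_Icc, Set.mem_preimage,
      upset, Set.mem_setOf_eq]
    constructor
    · rintro ⟨hb, y, hy, hyle⟩
      have hy01 := hV.2.1 hy
      refine ⟨fun j => ⟨by linarith [(hb j).1], by linarith [(hb j).2]⟩,
        ⟨⟨?_, ?_⟩, y, hy, ?_⟩⟩
      · intro i
        simp only [Pi.zero_apply]
        exact le_min (hb i).1 zero_le_one
      · intro i
        simp only [Pi.one_apply]
        exact min_le_right _ _
      · intro i
        have : y i ≤ 1 := by simpa using hy01.2 i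
        exact le_min (hyle i) this
    · rintro ⟨hb, ⟨-, y, hy, hyle⟩⟩
      refine ⟨fun j => ⟨by linarith [(hb j).1], by linarith [(hb j).2]⟩, y, hy, fun i => ?_⟩
      exact (hyle i).trans (min_le_left _ _)
  rw [h1]
  exact (isClosed_iInter fun j => isClosed_Icc).inter
    (hV.2.2.2.1.preimage (continuous_pi fun i =>
      ((continuous_id.add continuous_const).min continuous_const)))

lemma tstar_mem {K : ℕ} {V : Set (Fin K → ℝ)} {p : Fin K → ℝ}
    (hK : 0 < K) (hV : memF K V) (hp : ∀ i, 0 ≤ p i ∧ p i ≤ 1) :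
    sInf (Sset K p V) ∈ Sset K p V :=
  (Sset_isClosed hV).csInf_mem ⟨1, one_mem_Sset hV hp⟩
    (Sset_bddBelow hK (fun i => (hp i).2))

lemma Dset_convex {K : ℕ} {V : Set (Fin K → ℝ)} (hV : memF K V) :
    Convex ℝ {x : Fin K → ℝ | ∃ y ∈ V, ∀ i, y i ≤ x i} := by
  rintro x ⟨y, hy, hyx⟩ x' ⟨y', hy', hyx'⟩ a b ha hb hab
  have hyu : y ∈ upset K V := ⟨hV.2.1 hy, y, hy, le_refl y⟩
  have hyu' : y' ∈ upset K V := ⟨hV.2.1 hy', y', hy', le_refl y'⟩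
  obtain ⟨-, y'', hy'', hle⟩ := hV.2.2.2.2 hyu hyu' ha hb hab
  refine ⟨y'', hy'', fun i => ?_⟩
  have h1 : y'' i ≤ a * y i + b * y' i := by simpa using hle i
  have h2 : a * y i ≤ a * x i := mul_le_mul_of_nonneg_left (hyx i) ha
  have h3 : b * y' i ≤ b * x' i := mul_le_mul_of_nonneg_left (hyx' i) hb
  have h4 : (a • x + b • x') i = a * x i + b * x' i := by simp
  linarith

lemma exists_pareto_le {K : ℕ} {S : Set (Fin K → ℝ)} (hS : IsCompact S) {x : Fin K → ℝ}
    (hx : x ∈ S) : ∃ u ∈ pareto K S, u ≤ x := by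
  have hT : IsCompact (S ∩ Set.Iic x) := hS.inter_right isClosed_Iic
  obtain ⟨u, huT, humin⟩ := hT.exists_isMinOn ⟨x, hx, le_refl x⟩
    ((continuous_finset_sum Finset.univ fun i _ => continuous_apply i).continuousOn
      (f := fun y : Fin K → ℝ => ∑ i, y i))
  refine ⟨u, ⟨huT.1, fun z hz hzu => ?_⟩, huT.2⟩
  have hzT : z ∈ S ∩ Set.Iic x := ⟨hz, hzu.trans huT.2⟩
  have hsum : ∑ i, u i ≤ ∑ i, z i := humin hzT
  funext i
  by_contra hne
  have hlt : z i < u i := lt_of_le_of_ne (hzu i) hne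
  have : ∑ j, z j < ∑ j, u j :=
    Finset.sum_lt_sum (fun j _ => hzu j) ⟨i, Finset.mem_univ i, hlt⟩
  linarith

lemma round_exists {K N : ℕ} {V : Set (Fin K → ℝ)} (hN : 0 < N) (hK : 0 < K)
    (hV : memF K V) {v : Fin K → ℝ} (hv : v ∈ V) :
    ∃ q ∈ paramSetN K N, (∀ i, Fparam K q V i ≤ v i + 1 / N) ∧ ∀ i, Fparam K q V i ≤ 1 := by
  haveI : Nonempty (Fin K) := ⟨⟨0, hK⟩⟩
  have hNR : (0:ℝ) < N := by exact_mod_cast hN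
  obtain ⟨i₀, hi₀⟩ := Finite.exists_min v
  have hv01 := hV.2.1 hv
  have hv0 : ∀ i, 0 ≤ v i := fun i => by simpa using hv01.1 i
  have hv1 : ∀ i, v i ≤ 1 := fun i => by simpa using hv01.2 i
  set m := v i₀ with hm
  set b : ℕ := ⌈m * N⌉₊ with hb
  set β : ℝ := (b:ℝ) / N with hβ
  have hbN : b ≤ N := Nat.ceil_le.mpr (by nlinarith [hv1 i₀])
  have hβ1 : β ≤ 1 := by rw [hβ, div_le_one hNR]; exact_mod_cast hbN
  have hβ0 : 0 ≤ β := by positivity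
  have hmβ : m ≤ β := by rw [hβ, le_div_iff₀ hNR]; exact Nat.le_ceil _
  have hβm : β ≤ m + 1/N := by
    rw [hβ, div_le_iff₀ hNR]
    have hc := Nat.ceil_lt_add_one (show (0:ℝ) ≤ m * N by
      rw [hm]; exact mul_nonneg (hv0 i₀) hNR.le)
    have h2 : (m + 1/(N:ℝ)) * N = m * N + 1 := by field_simp
    rw [h2]; exact le_of_lt hc
  set J : Fin K → ℕ := fun i => ⌈(v i - β) * N⌉₊ with hJ
  set q : Fin K → ℝ := fun i => (J i : ℝ) / N with hq
  have hq0 : ∀ i, 0 ≤ q i := fun i => by positivity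
  have hJle : ∀ i, J i ≤ N - b := by
    intro i
    refine Nat.ceil_le.mpr ?_
    rw [Nat.cast_sub hbN]
    have hβN : β * N = b := by rw [hβ, div_mul_cancel₀ _ hNR.ne']
    nlinarith [hv1 i]
  have hqβ : ∀ i, q i ≤ 1 - β := by
    intro i
    have h2 : ((J i : ℝ)) ≤ (N:ℝ) - b := by
      have := hJle i
      calc ((J i : ℝ)) ≤ ((N - b : ℕ) : ℝ) := by exact_mod_cast this
        _ = (N:ℝ) - b := by rw [Nat.cast_sub hbN]
    rw [hq, hβ]
    beta_reduce
    rw [div_le_iff₀ hNR] at *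
    have h3 : (1 - (b:ℝ)/N) * N = N - b := by field_simp
    rw [h3]; exact h2
  have hq1 : ∀ i, q i ≤ 1 := fun i => (hqβ i).trans (by linarith)
  have hqi₀ : q i₀ = 0 := by
    have h4 : J i₀ = 0 := Nat.ceil_eq_zero.mpr (by nlinarith)
    simp [hq, h4]
  have hvq : ∀ i, v i - β ≤ q i := by
    intro i
    rw [hq]; beta_reduce; rw [le_div_iff₀ hNR]
    exact Nat.le_ceil _
  have hβS : β ∈ Sset K q V := by
    refine ⟨fun j => ⟨by linarith [hq0 j], by linarith [hq1 j]⟩, v, hv, fun i => ?_⟩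
    linarith [hvq i]
  have hts : sInf (Sset K q V) ≤ β := csInf_le (Sset_bddBelow hK hq1) hβS
  have hqmem : q ∈ paramSetN K N := by
    refine ⟨⟨fun i => ⟨hq0 i, hq1 i⟩, ⟨i₀, hqi₀⟩⟩, fun i => ⟨J i, ?_, rfl⟩⟩
    exact (hJle i).trans (Nat.sub_le _ _)
  refine ⟨q, hqmem, fun i => ?_, fun i => ?_⟩
  · show sInf (Sset K q V) + q i ≤ v i + 1 / N
    by_cases hcase : (v i - β) * N ≤ 0
    · have hJ0 : J i = 0 := Nat.ceil_eq_zero.mpr hcase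
      have h5 : q i = 0 := by simp [hq, hJ0]
      rw [h5]
      have h6 : m ≤ v i := hi₀ i
      linarith
    · push_neg at hcase
      have hc := Nat.ceil_lt_add_one (le_of_lt (by nlinarith : (0:ℝ) < (v i - β) * N))
      have h7 : q i < v i - β + 1/N := by
        rw [hq]; beta_reduce; rw [div_lt_iff₀ hNR]
        have h3 : (v i - β + 1/(N:ℝ)) * N = (v i - β) * N + 1 := by field_simp
        rw [h3]; exact hc
      linarith
  · show sInf (Sset K q V) + q i ≤ 1
    linarith [hqβ i]

lemma eDom_le_of {K : ℕ} {U V : Set (Fin K → ℝ)} {ε : ℝ} (hε : 0 ≤ ε)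
    (h : ∀ u ∈ U, ∃ v ∈ V, ∀ i, v i ≤ u i + ε) : eDom K U V ≤ ε :=
  csInf_le ⟨0, fun x hx => hx.1⟩ ⟨hε, h⟩

lemma eDom_eq_zero {K : ℕ} {U V : Set (Fin K → ℝ)}
    (h : ∀ u ∈ U, ∃ v ∈ V, v ≤ u) : eDom K U V = 0 := by
  have h0 : (0:ℝ) ∈ {ε : ℝ | 0 ≤ ε ∧ ∀ u ∈ U, ∃ v ∈ V, ∀ i, v i ≤ u i + ε} := by
    refine ⟨le_refl 0, fun u hu => ?_⟩
    obtain ⟨v, hv, hle⟩ := h u hu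
    exact ⟨v, hv, fun i => by simpa using hle i⟩
  exact le_antisymm (csInf_le ⟨0, fun x hx => hx.1⟩ h0) (le_csInf ⟨0, h0⟩ fun ε hε => hε.1)

lemma eDom_empty_right {K : ℕ} {V : Set (Fin K → ℝ)} (hV : V.Nonempty) :
    eDom K V ∅ = 0 := by
  obtain ⟨v₀, hv₀⟩ := hV
  unfold eDom
  have hset : {ε : ℝ | 0 ≤ ε ∧ ∀ v ∈ V, ∃ u ∈ (∅ : Set (Fin K → ℝ)), ∀ i, u i ≤ v i + ε}
      = ∅ := by
    ext ε
    simp only [Set.mem_setOf_eq, Set.mem_empty_iff_false, iff_false, not_and]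
    intro _ h
    obtain ⟨u, hu, -⟩ := h v₀ hv₀
    exact hu
  rw [hset, Real.sInf_empty]

/-- for every `V ∈ 𝓕` and `N ≥ 1`: `e(Γ_N(V), V) = 0`,
`e(V, Γ_N(V)) ≤ 1/N`, and hence `d(V, Γ_N(V)) ≤ 1/N`. -/
theorem gammaN_approx {K : ℕ} (N : ℕ) (hN : 0 < N)
    (V : Set (Fin K → ℝ)) (hV : memF K V) :
    eDom K (gammaN K N V) V = 0 ∧
      eDom K V (gammaN K N V) ≤ 1 / N ∧
      dF K V (gammaN K N V) ≤ 1 / N := by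
  have hNR : (0:ℝ) < N := by exact_mod_cast hN
  have h1N : (0:ℝ) ≤ 1/N := by positivity
  rcases Nat.eq_zero_or_pos K with hK0 | hK
  · subst hK0
    have hP : paramSetN 0 N = ∅ := by
      ext p
      simp [paramSetN, paramSet]
    have hΓ : gammaN 0 N V = ∅ := by
      unfold gammaN
      rw [hP]
      simp [pareto]
    refine ⟨?_, ?_, ?_⟩
    · rw [hΓ]
      exact eDom_eq_zero (fun u hu => absurd hu (Set.notMem_empty u))
    · rw [hΓ, eDom_empty_right hV.1]
      exact h1N
    · rw [hΓ]
      unfold dF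
      have hup : upset 0 (∅ : Set (Fin 0 → ℝ)) = ∅ := by
        ext x; simp [upset]
      rw [hup, Metric.hausdorffDist_empty]
      exact h1N
  · haveI : Nonempty (Fin K) := ⟨⟨0, hK⟩⟩
    set pts := (fun p => Fparam K p V) '' paramSetN K N with hpts
    have hPfin : (paramSetN K N).Finite := by
      apply Set.Finite.subset (Set.Finite.pi
        (t := fun _ : Fin K => (fun j : ℕ => (j:ℝ)/N) '' Set.Iic N)
        (fun i => (Set.finite_Iic N).image _))
      intro p hp
      rw [Set.mem_pi]
      intro i _
      obtain ⟨j, hj, hje⟩ := hp.2 i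
      exact ⟨j, hj, hje.symm⟩
    have hfin : pts.Finite := hPfin.image _
    have hcomp : IsCompact (convexHull ℝ pts) := hfin.isCompact_convexHull ℝ
    have hCcl : closure (convexHull ℝ pts) = convexHull ℝ pts := hcomp.isClosed.closure_eq
    have hΓeq : gammaN K N V = pareto K (convexHull ℝ pts) := by
      unfold gammaN
      rw [← hpts, hCcl]
    have hptsD : ∀ x ∈ pts, ∃ y ∈ V, ∀ i, y i ≤ x i := by
      rintro x ⟨p, hp, rfl⟩
      have hp01 : ∀ i, 0 ≤ p i ∧ p i ≤ 1 := fun i => ⟨(hp.1.1 i).1, (hp.1.1 i).2⟩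
      obtain ⟨-, y, hy, hyle⟩ := tstar_mem hK hV hp01
      exact ⟨y, hy, fun i => hyle i⟩
    have hptsNN : ∀ x ∈ pts, ∀ i, 0 ≤ x i := by
      rintro x ⟨p, hp, rfl⟩ i
      have hp01 : ∀ i, 0 ≤ p i ∧ p i ≤ 1 := fun i => ⟨(hp.1.1 i).1, (hp.1.1 i).2⟩
      obtain ⟨hbd, -⟩ := tstar_mem hK hV hp01
      exact (hbd i).1
    have hDom : ∀ x ∈ convexHull ℝ pts, ∃ y ∈ V, ∀ i, y i ≤ x i :=
      fun x hx => convexHull_min hptsD (Dset_convex hV) hx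
    have hNN : ∀ x ∈ convexHull ℝ pts, ∀ i, 0 ≤ x i := by
      have hsub : convexHull ℝ pts ⊆ Set.Ici (0 : Fin K → ℝ) :=
        convexHull_min (fun x hx => Set.mem_Ici.mpr (by
          intro i; simpa using hptsNN x hx i)) (convex_Ici _)
      intro x hx i
      simpa using hsub hx i
    have hmain : ∀ v ∈ V, ∃ u ∈ pareto K (convexHull ℝ pts),
        (∀ i, u i ≤ v i + 1/N) ∧ (∀ i, u i ≤ 1) ∧ (∀ i, 0 ≤ u i) := by
      intro v hv
      obtain ⟨q, hq, hF1, hF2⟩ := round_exists hN hK hV hv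
      have hFpts : Fparam K q V ∈ convexHull ℝ pts :=
        subset_convexHull ℝ pts ⟨q, hq, rfl⟩
      obtain ⟨u, hu, hule⟩ := exists_pareto_le hcomp hFpts
      exact ⟨u, hu, fun i => (hule i).trans (hF1 i), fun i => (hule i).trans (hF2 i),
        fun i => hNN u hu.1 i⟩
    refine ⟨?_, ?_, ?_⟩
    · rw [hΓeq]
      apply eDom_eq_zero
      intro u hu
      obtain ⟨y, hy, hyle⟩ := hDom u hu.1
      exact ⟨y, hy, fun i => hyle i⟩
    · rw [hΓeq]
      apply eDom_le_of h1N
      intro v hv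
      obtain ⟨u, hu, h1, -, -⟩ := hmain v hv
      exact ⟨u, hu, h1⟩
    · rw [hΓeq]
      unfold dF
      apply Metric.hausdorffDist_le_of_mem_dist h1N
      · rintro x ⟨hxI, v, hv, hvx⟩
        obtain ⟨u, hu, h1, h2, h3⟩ := hmain v hv
        have hx1 : ∀ i, x i ≤ 1 := fun i => by simpa using hxI.2 i
        have hx0 : ∀ i, 0 ≤ x i := fun i => by simpa using hxI.1 i
        refine ⟨fun i => max (u i) (x i - 1/N), ⟨⟨?_, ?_⟩, u, hu, ?_⟩, ?_⟩
        · intro i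
          simp only [Pi.zero_apply]
          exact le_max_of_le_left (h3 i)
        · intro i
          simp only [Pi.one_apply]
          exact max_le (h2 i) (by linarith [hx1 i])
        · intro i
          exact le_max_left _ _
        · rw [dist_pi_le_iff h1N]
          intro i
          rw [Real.dist_eq, abs_sub_le_iff]
          constructor
          · have := le_max_right (u i) (x i - 1/N)
            linarith
          · have hz : max (u i) (x i - 1/N) ≤ x i + 1/N :=
              max_le (by linarith [h1 i, hvx i]) (by linarith)
            linarith
      · rintro z ⟨hzI, u, hu, huz⟩
        obtain ⟨y, hy, hyle⟩ := hDom u hu.1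
        refine ⟨z, ⟨hzI, y, hy, fun i => (hyle i).trans (huz i)⟩, ?_⟩
        rw [dist_self]
        exact h1N
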